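/- Let p be an odd prime power and q = p (more generally let q be any odd prime power), and let F_{q²} be the field with q² elements. For every integer n ≥ 1, the number of solutions (x_1, …, x_n) ∈ F_{q²}^n of the equation x_1^{q+1} + x_2^{q+1} + ⋯ + x_n^{q+1} = 0 equals q^{2n-1} + (-q)^n + (-q)^{n-1}. -/

import Mathlib

open Finset Polynomial

section Aux

variable {F : Type} [Field F] [Fintype F] [DecidableEq F] {q : ℕ}

/-- In a field, the solutions of `y^m = 1` number at most `m`. -/
lemma aux_card_pow_eq_one_le (m : ℕ) (hm : 0 < m) :
    (Finset.univ.filter fun y : F => y ^ m = 1).card ≤ m := by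
  have hsub : (Finset.univ.filter fun y : F => y ^ m = 1) ⊆ nthRootsFinset m (1 : F) := by
    intro y hy
    rw [Polynomial.mem_nthRootsFinset hm (1 : F)]
    exact (Finset.mem_filter.mp hy).2
  refine (Finset.card_le_card hsub).trans ?_
  rw [Polynomial.nthRootsFinset_def]
  exact (Multiset.toFinset_card_le _).trans (Polynomial.card_nthRoots m 1)

/-- Key structure of the norm map `x ↦ x^(q+1)` on `F_{q²}`: its kernel (the
`q+1`-st roots of unity) has exactly `q+1` elements, and every nonzero `c`
with `c^(q-1) = 1` is a norm. -/
lemma aux_norm (hq1 : 1 < q) (hcard : Fintype.card F = q ^ 2) :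
    (Finset.univ.filter fun y : F => y ^ (q + 1) = 1).card = q + 1 ∧
      ∀ c : F, c ≠ 0 → c ^ (q - 1) = 1 → ∃ x : F, x ^ (q + 1) = c := by
  classical
  have hcu : Fintype.card Fˣ = q ^ 2 - 1 := by rw [Fintype.card_units, hcard]
  set φ : Fˣ →* Fˣ := powMonoidHom (q + 1) with hφ
  have hq2 : (q + 1) * (q - 1) = q ^ 2 - 1 := by
    obtain ⟨r, rfl⟩ := Nat.exists_eq_add_of_le hq1.le
    have h3 : (1 + r) - 1 = r := by omega
    have h2 : (1 + r) ^ 2 = r * r + 2 * r + 1 := by ring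
    have h4 : (1 + r + 1) * r = r * r + 2 * r := by ring
    rw [h3, h2, h4]
    omega
  -- card identity
  have hprod : Nat.card φ.ker * Nat.card φ.range = q ^ 2 - 1 := by
    have h1 : Nat.card Fˣ = Nat.card (Fˣ ⧸ φ.ker) * Nat.card φ.ker :=
      Subgroup.card_eq_card_quotient_mul_card_subgroup φ.ker
    have h2 : Nat.card (Fˣ ⧸ φ.ker) = Nat.card φ.range :=
      Nat.card_congr (QuotientGroup.quotientKerEquivRange φ).toEquiv
    rw [h2] at h1
    rw [mul_comm, ← h1, Nat.card_eq_fintype_card, hcu]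
  -- membership facts
  have hker_mem : ∀ u : φ.ker, ((u : Fˣ) : F) ^ (q + 1) = 1 := by
    intro u
    have h5 : (u : Fˣ) ^ (q + 1) = 1 := u.2
    rw [← Units.val_pow_eq_pow_val, h5, Units.val_one]
  have hrange_mem : ∀ u : φ.range, ((u : Fˣ) : F) ^ (q - 1) = 1 := by
    intro u
    obtain ⟨v, hv⟩ := u.2
    have hv' : v ^ (q + 1) = (u : Fˣ) := hv
    have h5 : (u : Fˣ) ^ (q - 1) = 1 := by
      rw [← hv', ← pow_mul, hq2, ← hcu, pow_card_eq_one]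
    rw [← Units.val_pow_eq_pow_val, h5, Units.val_one]
  -- the kernel is in bijection with the `F`-solutions of `y^(q+1) = 1`
  set A := Finset.univ.filter fun y : F => y ^ (q + 1) = 1 with hA
  set B := Finset.univ.filter fun y : F => y ^ (q - 1) = 1 with hB
  have fA : φ.ker → {y : F // y ∈ A} := fun u =>
    ⟨((u : Fˣ) : F), by rw [hA, Finset.mem_filter]; exact ⟨Finset.mem_univ _, hker_mem u⟩⟩
  have hkerA : Nat.card φ.ker = A.card := by
    rw [Nat.card_eq_fintype_card, ← Fintype.card_coe]
    refine Fintype.card_of_bijective (f := fun u : φ.ker =>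
      (⟨((u : Fˣ) : F), by
        rw [hA, Finset.mem_filter]; exact ⟨Finset.mem_univ _, hker_mem u⟩⟩ :
        {y : F // y ∈ A})) ⟨?_, ?_⟩
    · intro u v huv
      have : ((u : Fˣ) : F) = ((v : Fˣ) : F) := congrArg Subtype.val huv
      exact Subtype.ext (Units.ext this)
    · rintro ⟨y, hy⟩
      rw [hA, Finset.mem_filter] at hy
      have hy1 : y ^ (q + 1) = 1 := hy.2
      have hy0 : y ≠ 0 := by
        intro h; rw [h, zero_pow (by omega : q + 1 ≠ 0)] at hy1
        exact one_ne_zero hy1.symm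
      have hmem : Units.mk0 y hy0 ∈ φ.ker := by
        show (Units.mk0 y hy0) ^ (q + 1) = 1
        ext
        rw [Units.val_pow_eq_pow_val, Units.val_mk0, Units.val_one]
        exact hy1
      exact ⟨⟨Units.mk0 y hy0, hmem⟩, Subtype.ext rfl⟩
  -- range injects into B
  have fBdef : ∀ u : φ.range, ((u : Fˣ) : F) ∈ B := by
    intro u; rw [hB, Finset.mem_filter]; exact ⟨Finset.mem_univ _, hrange_mem u⟩
  have hfB_inj : Function.Injective
      (fun u : φ.range => (⟨((u : Fˣ) : F), fBdef u⟩ : {y : F // y ∈ B})) := by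
    intro u v huv
    have : ((u : Fˣ) : F) = ((v : Fˣ) : F) := congrArg Subtype.val huv
    exact Subtype.ext (Units.ext this)
  have hrange_le : Nat.card φ.range ≤ q - 1 := by
    calc Nat.card φ.range = Fintype.card φ.range := Nat.card_eq_fintype_card
      _ ≤ Fintype.card {y : F // y ∈ B} := Fintype.card_le_of_injective _ hfB_inj
      _ = B.card := Fintype.card_coe _
      _ ≤ q - 1 := aux_card_pow_eq_one_le _ (by omega)
  have hker_le : Nat.card φ.ker ≤ q + 1 := by
    rw [hkerA]; exact aux_card_pow_eq_one_le _ (by omega)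
  have hker_pos : 0 < Nat.card φ.ker := Nat.card_pos
  have hrange_pos : 0 < Nat.card φ.range := Nat.card_pos
  -- deduce exact cardinalities
  have hker_eq : Nat.card φ.ker = q + 1 ∧ Nat.card φ.range = q - 1 := by
    have hab : Nat.card φ.ker * Nat.card φ.range = (q + 1) * (q - 1) := by
      rw [hprod, hq2]
    have hb : Nat.card φ.range = q - 1 := by
      have h1 : (q + 1) * (q - 1) ≤ (q + 1) * Nat.card φ.range := by
        calc (q + 1) * (q - 1) = Nat.card φ.ker * Nat.card φ.range := hab.symm
          _ ≤ (q + 1) * Nat.card φ.range := Nat.mul_le_mul_right _ hker_le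
      have := Nat.le_of_mul_le_mul_left h1 (by omega)
      omega
    refine ⟨?_, hb⟩
    rw [hb] at hab
    exact Nat.eq_of_mul_eq_mul_right (by omega) hab
  constructor
  · rw [← hkerA]; exact hker_eq.1
  · -- surjectivity onto (q-1)-st roots of unity
    intro c hc0 hc1
    have hBcard : B.card = q - 1 := by
      have hle : B.card ≤ q - 1 := aux_card_pow_eq_one_le _ (by omega)
      have hge : q - 1 ≤ B.card := by
        rw [← hker_eq.2]
        calc Nat.card φ.range = Fintype.card φ.range := Nat.card_eq_fintype_card
          _ ≤ Fintype.card {y : F // y ∈ B} := Fintype.card_le_of_injective _ hfB_inj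
          _ = B.card := Fintype.card_coe _
      omega
    have hbij : Function.Bijective
        (fun u : φ.range => (⟨((u : Fˣ) : F), fBdef u⟩ : {y : F // y ∈ B})) := by
      rw [Fintype.bijective_iff_injective_and_card]
      refine ⟨hfB_inj, ?_⟩
      rw [Fintype.card_coe, hBcard, ← hker_eq.2, Nat.card_eq_fintype_card]
    have hcB : (c : F) ∈ B := by
      rw [hB, Finset.mem_filter]; exact ⟨Finset.mem_univ _, hc1⟩
    obtain ⟨u, hu⟩ := hbij.2 ⟨c, hcB⟩
    obtain ⟨v, hv⟩ := u.2
    have hv' : v ^ (q + 1) = (u : Fˣ) := hv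
    refine ⟨((v : Fˣ) : F), ?_⟩
    have h4 : ((u : Fˣ) : F) = c := congrArg Subtype.val hu
    rw [← Units.val_pow_eq_pow_val, hv', h4]

/-- Fiber count of the norm map over a nonzero element of `F_q`. -/
lemma aux_fiber (hq1 : 1 < q) (hcard : Fintype.card F = q ^ 2)
    (c : F) (hc0 : c ≠ 0) (hcq : c ^ q = c) :
    (Finset.univ.filter fun x : F => x ^ (q + 1) = c).card = q + 1 := by
  obtain ⟨hA, hsurj⟩ := aux_norm hq1 hcard
  have hc1 : c ^ (q - 1) = 1 := by
    have h : c ^ (q - 1) * c = 1 * c := by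
      rw [one_mul, ← pow_succ]
      have : q - 1 + 1 = q := by omega
      rw [this, hcq]
    exact mul_right_cancel₀ hc0 h
  obtain ⟨x₀, hx₀⟩ := hsurj c hc0 hc1
  have hx₀0 : x₀ ≠ 0 := by
    intro h; rw [h, zero_pow (by omega)] at hx₀; exact hc0 hx₀.symm
  have hbijcard : (Finset.univ.filter fun y : F => y ^ (q + 1) = 1).card
      = (Finset.univ.filter fun x : F => x ^ (q + 1) = c).card := by
    apply Finset.card_bij (fun y _ => x₀ * y)
    · intro y hy
      rw [Finset.mem_filter] at hy ⊢
      refine ⟨Finset.mem_univ _, ?_⟩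
      rw [mul_pow, hx₀, hy.2, mul_one]
    · intro y₁ h₁ y₂ h₂ h
      exact mul_left_cancel₀ hx₀0 h
    · intro x hx
      rw [Finset.mem_filter] at hx
      refine ⟨x₀⁻¹ * x, ?_, by field_simp⟩
      rw [Finset.mem_filter]
      refine ⟨Finset.mem_univ _, ?_⟩
      rw [mul_pow, inv_pow, hx.2, ← hx₀, inv_mul_cancel₀ (pow_ne_zero _ hx₀0)]
  rw [← hbijcard]
  exact hA

/-- Fiber over `0`. -/
lemma aux_fiber0 (hq1 : 1 < q) :
    (Finset.univ.filter fun x : F => x ^ (q + 1) = (0 : F)).card = 1 := by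
  have : (Finset.univ.filter fun x : F => x ^ (q + 1) = (0 : F)) = {0} := by
    ext x
    simp [pow_eq_zero_iff (n := q + 1) (by omega)]
  rw [this, Finset.card_singleton]

omit [DecidableEq F] in
/-- Frobenius additivity for `q` a prime power. -/
lemma aux_frob (hq : IsPrimePow q) (hcard : Fintype.card F = q ^ 2)
    (a b : F) : (a + b) ^ q = a ^ q + b ^ q := by
  obtain ⟨p, k, hp, hk, hpk⟩ := hq
  have hp' : p.Prime := Nat.prime_iff.mpr hp
  -- identify the characteristic
  obtain ⟨r, hr⟩ := CharP.exists F
  haveI := hr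
  obtain ⟨m, hrprime, hcardr⟩ := FiniteField.card F r
  have hrp : r = p := by
    have h1 : r ∣ q ^ 2 := by
      rw [← hcard, hcardr]
      exact dvd_pow_self r m.pos.ne'
    rw [← hpk, ← pow_mul] at h1
    have h2 : r ∣ p := hrprime.dvd_of_dvd_pow h1
    exact (Nat.prime_dvd_prime_iff_eq hrprime hp').mp h2
  subst hrp
  haveI : Fact r.Prime := ⟨hp'⟩
  haveI : ExpChar F r := ExpChar.prime hp'
  rw [← hpk]
  exact add_pow_char_pow a b r k

end Aux

/-- Point count of the Hermitian Fermat hypersurface over `F_q`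
(base case of Lemma 5.40). -/
theorem stmt_6 (q : ℕ) (hq : IsPrimePow q) (hodd : Odd q)
    (F : Type) [Field F] [Fintype F] (hcard : Fintype.card F = q ^ 2)
    (n : ℕ) (hn : 1 ≤ n) :
    (Nat.card {x : Fin n → F // ∑ i, x i ^ (q + 1) = 0} : ℤ)
      = (q : ℤ) ^ (2 * n - 1) + (-(q : ℤ)) ^ n + (-(q : ℤ)) ^ (n - 1) := by
  classical
  have hq1 : 1 < q := hq.one_lt
  -- the sum of norms is fixed by the Frobenius x ↦ x^q
  have hfrob : ∀ (m : ℕ) (x : Fin m → F),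
      (∑ i, x i ^ (q + 1)) ^ q = ∑ i, x i ^ (q + 1) := by
    intro m x
    have hsum : ∀ (s : Finset (Fin m)), (∑ i ∈ s, x i ^ (q + 1)) ^ q
        = ∑ i ∈ s, (x i ^ (q + 1)) ^ q := by
      intro s
      induction s using Finset.induction with
      | empty => simp [zero_pow (by omega : q ≠ 0)]
      | insert _ _ h ih =>
          rw [Finset.sum_insert h, Finset.sum_insert h, aux_frob hq hcard, ih]
    rw [hsum]
    congr 1
    funext i
    have hpc : (x i) ^ (q ^ 2) = x i := by
      rw [← hcard]; exact FiniteField.pow_card (x i)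
    calc (x i ^ (q + 1)) ^ q = x i ^ ((q + 1) * q) := by rw [← pow_mul]
      _ = x i ^ (q ^ 2 + q) := by ring_nf
      _ = x i ^ (q ^ 2) * x i ^ q := by rw [pow_add]
      _ = x i * x i ^ q := by rw [hpc]
      _ = x i ^ (q + 1) := by rw [pow_add, pow_one, mul_comm]
  -- counting function
  obtain ⟨N, hN⟩ : ∃ N : ℕ → ℕ, ∀ m, N m =
      (Finset.univ.filter fun x : Fin m → F => ∑ i, x i ^ (q + 1) = 0).card :=
    ⟨_, fun m => rfl⟩
  have hNcard : ∀ m, Nat.card {x : Fin m → F // ∑ i, x i ^ (q + 1) = 0} = N m := by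
    intro m
    rw [Nat.card_eq_fintype_card, Fintype.card_subtype, hN]
  -- base case
  have hN1 : N 1 = 1 := by
    rw [hN]
    have : (Finset.univ.filter fun x : Fin 1 → F => ∑ i, x i ^ (q + 1) = 0)
        = {fun _ => 0} := by
      ext x
      simp only [Finset.mem_filter, Finset.mem_univ, true_and,
        Finset.mem_singleton, Fin.sum_univ_one]
      rw [pow_eq_zero_iff (by omega : q + 1 ≠ 0)]
      constructor
      · intro h; funext i; have : i = 0 := Subsingleton.elim _ _; rw [this, h]
      · intro h; rw [h]
    rw [this, Finset.card_singleton]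
  -- recursion
  have hrec : ∀ m, N (m + 1) = N m + (q + 1) * (q ^ (2 * m) - N m) := by
    intro m
    have hcardfun : Fintype.card (Fin m → F) = q ^ (2 * m) := by
      rw [Fintype.card_fun, hcard, Fintype.card_fin, ← pow_mul, mul_comm 2 m]
    -- rewrite over the product type
    have e := (Fin.consEquiv (fun _ : Fin (m + 1) => F)).symm
    have hstep : N (m + 1) =
        (Finset.univ.filter fun w : F × (Fin m → F) =>
          w.1 ^ (q + 1) + ∑ i, w.2 i ^ (q + 1) = 0).card := by
      rw [hN]
      rw [← Fintype.card_subtype, ← Fintype.card_subtype]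
      apply Fintype.card_congr
      refine Equiv.subtypeEquiv (Fin.consEquiv (fun _ : Fin (m + 1) => F)).symm ?_
      intro x
      simp only [Fin.consEquiv_symm_apply]
      rw [Fin.sum_univ_succ]
      rfl
    rw [hstep]
    -- convert card to a double sum
    rw [Finset.card_filter]
    rw [Fintype.sum_prod_type_right]
    have hinner : ∀ x : Fin m → F,
        (∑ y : F, if y ^ (q + 1) + ∑ i, x i ^ (q + 1) = 0 then 1 else 0)
          = if (∑ i, x i ^ (q + 1)) = 0 then 1 else q + 1 := by
      intro x
      set s := ∑ i, x i ^ (q + 1) with hs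
      have h1 : (∑ y : F, if y ^ (q + 1) + s = 0 then 1 else 0)
          = (Finset.univ.filter fun y : F => y ^ (q + 1) = -s).card := by
        rw [Finset.card_filter]
        congr 1
        funext y
        congr 1
        simp [eq_neg_iff_add_eq_zero]
      rw [h1]
      by_cases h0 : s = 0
      · rw [if_pos h0]
        have h6 : (Finset.univ.filter fun y : F => y ^ (q + 1) = -s).card
            = (Finset.univ.filter fun y : F => y ^ (q + 1) = (0 : F)).card := by
          rw [h0, neg_zero]
        rw [h6]
        exact aux_fiber0 hq1
      · rw [if_neg h0]
        apply aux_fiber hq1 hcard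
        · exact neg_ne_zero.mpr h0
        · have hsq : s ^ q = s := hfrob m x
          rw [Odd.neg_pow hodd, hsq]
    calc (∑ x : Fin m → F, ∑ y : F,
            if y ^ (q + 1) + ∑ i, x i ^ (q + 1) = 0 then 1 else 0)
        = ∑ x : Fin m → F,
            (if (∑ i, x i ^ (q + 1)) = 0 then 1 else q + 1) := by
          apply Finset.sum_congr rfl
          intro x _
          exact hinner x
      _ = N m + (q + 1) * (q ^ (2 * m) - N m) := by
          rw [Finset.sum_ite]
          simp only [Finset.sum_const, smul_eq_mul, mul_one]
          have h2 : (Finset.univ.filter fun x : Fin m → F =>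
              ¬ (∑ i, x i ^ (q + 1) = 0)).card = q ^ (2 * m) - N m := by
            have h7 : ((Finset.univ : Finset (Fin m → F)).filter
                  (fun x : Fin m → F => ∑ i, x i ^ (q + 1) = 0)).card
                + ((Finset.univ : Finset (Fin m → F)).filter
                  (fun x : Fin m → F => ¬ (∑ i, x i ^ (q + 1) = 0))).card
                = (Finset.univ : Finset (Fin m → F)).card :=
              Finset.card_filter_add_card_filter_not _
            rw [Finset.card_univ, hcardfun] at h7
            rw [hN]
            exact Nat.eq_sub_of_add_eq' h7
          rw [h2, ← hN, Nat.mul_comm (q ^ (2 * m) - N m) (q + 1)]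
      _ = N m + (q + 1) * (q ^ (2 * m) - N m) := rfl
  -- N m ≤ q ^ (2m)
  have hNle : ∀ m, N m ≤ q ^ (2 * m) := by
    intro m
    have hcardfun : Fintype.card (Fin m → F) = q ^ (2 * m) := by
      rw [Fintype.card_fun, hcard, Fintype.card_fin, ← pow_mul, mul_comm 2 m]
    rw [hN, ← hcardfun, ← Finset.card_univ]
    exact Finset.card_filter_le _ _
  -- induction
  rw [hNcard]
  clear hNcard
  induction n with
  | zero => omega
  | succ m ih =>
    rcases Nat.eq_or_lt_of_le hn with h1 | h1
    · -- m + 1 = 1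
      have hm : m = 0 := by omega
      subst hm
      rw [hN1]
      norm_num
    · have hm : 1 ≤ m := by omega
      have ihm := ih hm
      have hrm := hrec m
      have hNlem := hNle m
      obtain ⟨s, hs⟩ : ∃ s, m = s + 1 := ⟨m - 1, by omega⟩
      subst hs
      have hexp1 : 2 * (s + 1) - 1 = 2 * s + 1 := by omega
      have hexp2 : (s + 1) - 1 = s := by omega
      have hexp3 : 2 * (s + 1 + 1) - 1 = 2 * s + 3 := by omega
      have hexp4 : (s + 1 + 1) - 1 = s + 1 := by omega
      rw [hexp1, hexp2] at ihm
      rw [hexp3, hexp4]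
      have hcast : (N (s + 1 + 1) : ℤ)
          = (N (s + 1) : ℤ) + ((q : ℤ) + 1) * ((q : ℤ) ^ (2 * (s + 1)) - (N (s + 1) : ℤ)) := by
        rw [hrm]
        push_cast [hNlem]
        ring
      rw [hcast, ihm]
      ring
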